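/- Every unilateral updown category C has a universal cover: the category C̃ whose rank-n objects are strings (f₁, …, f_n) of composable morphisms between consecutive ranks starting at 0̂, with morphisms given by inclusion of initial segments, is a simple updown category, and the functor π : C̃ → C sending a string to the target of its last morphism is a covering map; moreover, for any covering map P : C' → C there is a covering map F : C̃ → C' with π = P ∘ F. -/

import Mathlib

/-! Core definitions: updown categories (Hoffman, "Updown categories"). -/

/-- The underlying data of a (small) category equipped with an ℕ-valued rank,
finite levels (given as `Finset`s) and a distinguished rank-0 object `zero`. -/
structure UpdownData where
  Obj : Type
  Hom : Obj → Obj → Type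
  id : ∀ p : Obj, Hom p p
  comp : ∀ {p q r : Obj}, Hom p q → Hom q r → Hom p r
  id_comp : ∀ {p q : Obj} (f : Hom p q), comp (id p) f = f
  comp_id : ∀ {p q : Obj} (f : Hom p q), comp f (id q) = f
  assoc : ∀ {p q r s : Obj} (f : Hom p q) (g : Hom q r) (h : Hom r s),
    comp (comp f g) h = comp f (comp g h)
  rank : Obj → ℕ
  level : ℕ → Finset Obj
  zero : Obj

namespace UpdownData

/-- Axioms A1–A5 of an updown category. -/
structure IsUpdownCat (C : UpdownData) : Prop where
  /-- `level n` is exactly the (finite) set of objects of rank `n` (A1). -/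
  mem_level : ∀ (n : ℕ) (p : C.Obj), p ∈ C.level n ↔ C.rank p = n
  /-- A2: `zero` is the unique rank-0 object. -/
  rank_zero : C.rank C.zero = 0
  zero_unique : ∀ p : C.Obj, C.rank p = 0 → p = C.zero
  /-- A2: there is a morphism from `zero` to every object. -/
  zero_init : ∀ p : C.Obj, Nonempty (C.Hom C.zero p)
  /-- A3: hom-sets are finite. -/
  homFinite : ∀ p q : C.Obj, Finite (C.Hom p q)
  /-- A3: `Hom p q` is empty unless `rank p < rank q` or `p = q`. -/
  hom_rank : ∀ p q : C.Obj, C.Hom p q → (C.rank p < C.rank q ∨ p = q)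
  /-- A3: every endomorphism is invertible, so `Hom p p = Aut p` is a group. -/
  aut_group : ∀ (p : C.Obj) (f : C.Hom p p),
    ∃ g : C.Hom p p, C.comp f g = C.id p ∧ C.comp g f = C.id p
  /-- A4: every morphism raising rank by more than one factors through the
  next level (hence, inductively, through all intermediate levels). -/
  factor : ∀ (p q : C.Obj) (f : C.Hom p q), C.rank p + 1 < C.rank q →
    ∃ (r : C.Obj) (g : C.Hom p r) (h : C.Hom r q),
      C.rank r = C.rank p + 1 ∧ C.comp g h = f
  /-- A5: `Aut p` acts freely on `Hom p q` by precomposition when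
  `rank q = rank p + 1`. -/
  free_pre : ∀ (p q : C.Obj), C.rank q = C.rank p + 1 →
    ∀ (α : C.Hom p p) (f : C.Hom p q), C.comp α f = f → α = C.id p
  /-- A5: `Aut q` acts freely on `Hom p q` by postcomposition when
  `rank q = rank p + 1`. -/
  free_post : ∀ (p q : C.Obj), C.rank q = C.rank p + 1 →
    ∀ (β : C.Hom q q) (f : C.Hom p q), C.comp f β = f → β = C.id q

/-- An updown category is unilateral if all automorphism groups are trivial. -/
def Unilateral (C : UpdownData) : Prop :=
  ∀ (p : C.Obj) (f : C.Hom p p), f = C.id p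

/-- An updown category is simple if there is at most one morphism between any
two objects and morphisms factor uniquely into rank-1 steps (so the object at
each intermediate rank in a factorization is unique). -/
def SimpleUD (C : UpdownData) : Prop :=
  (∀ p q : C.Obj, Subsingleton (C.Hom p q)) ∧
  (∀ (p q : C.Obj) (f : C.Hom p q) (k : ℕ), C.rank p < k → k < C.rank q →
    ∃! r : C.Obj, C.rank r = k ∧
      ∃ (g : C.Hom p r) (h : C.Hom r q), C.comp g h = f)

end UpdownData

/-! Functors between updown data, covering maps, morphisms of unilateral
updown categories. -/

namespace UpdownData

/-- A rank-preserving functor between updown data. -/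
structure UDFunctor (C D : UpdownData) where
  obj : C.Obj → D.Obj
  map : ∀ {p q : C.Obj}, C.Hom p q → D.Hom (obj p) (obj q)
  rank_eq : ∀ p : C.Obj, D.rank (obj p) = C.rank p
  map_id : ∀ p : C.Obj, map (C.id p) = D.id (obj p)
  map_comp : ∀ {p q r : C.Obj} (f : C.Hom p q) (g : C.Hom q r),
    map (C.comp f g) = D.comp (map f) (map g)

/-- Composition of functors (diagrammatic order). -/
def UDFunctor.comp {A B C : UpdownData} (F : UDFunctor A B) (G : UDFunctor B C) :
    UDFunctor A C where
  obj p := G.obj (F.obj p)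
  map f := G.map (F.map f)
  rank_eq p := (G.rank_eq _).trans (F.rank_eq p)
  map_id p := by show G.map (F.map (A.id p)) = _; rw [F.map_id, G.map_id]
  map_comp f g := by show G.map (F.map (A.comp f g)) = _; rw [F.map_comp, G.map_comp]

/-- For `p, q` in `C`, the induced function
`⊔_{q' : F(q') = F(q)} Hom(p,q') → Hom(F(p),F(q))`. -/
def inducedMap {C D : UpdownData} (F : UDFunctor C D) (p q : C.Obj) :
    (Σ q' : {q' : C.Obj // F.obj q' = F.obj q}, C.Hom p q'.1) →
      D.Hom (F.obj p) (F.obj q) :=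
  fun x => cast (congrArg (fun y => D.Hom (F.obj p) y) x.1.2) (F.map x.2)

/-- A morphism of unilateral updown categories: the induced function on
disjoint unions of hom-sets between adjacent ranks is injective. -/
def IsUUMorphism {C D : UpdownData} (F : UDFunctor C D) : Prop :=
  ∀ p q : C.Obj, C.rank q = C.rank p + 1 → Function.Injective (inducedMap F p q)

/-- A covering map of unilateral updown categories: surjective on objects, and
the induced function on disjoint unions of hom-sets between adjacent ranks is
bijective. -/
def IsCovering {C D : UpdownData} (F : UDFunctor C D) : Prop :=
  Function.Surjective F.obj ∧
  ∀ p q : C.Obj, C.rank q = C.rank p + 1 → Function.Bijective (inducedMap F p q)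

end UpdownData

namespace UniversalCover
open UpdownData

inductive Chain (C : UpdownData) : ℕ → C.Obj → Type
  | nil : Chain C 0 C.zero
  | cons {n : ℕ} {p q : C.Obj} (c : Chain C n p) (f : C.Hom p q) (hr : C.rank q = n + 1) :
      Chain C (n+1) q

abbrev CtObj (C : UpdownData) := Σ n : ℕ, Σ p : C.Obj, Chain C n p

variable {C : UpdownData}

inductive Ext : {n : ℕ} → {p : C.Obj} → {m : ℕ} → {q : C.Obj} →
    Chain C n p → Chain C m q → C.Hom p q → Prop
  | refl {n : ℕ} {p : C.Obj} (c : Chain C n p) : Ext c c (C.id p)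
  | step {n p m q r} {c : Chain C n p} {d : Chain C m q} {f : C.Hom p q}
      (h : Ext c d f) (g : C.Hom q r) (hr : C.rank r = m + 1) :
      Ext c (Chain.cons d g hr) (C.comp f g)

lemma Ext.rank_le {n m : ℕ} {p q : C.Obj} {c : Chain C n p} {d : Chain C m q}
    {f : C.Hom p q} (h : Ext c d f) : n ≤ m := by
  induction h with
  | refl => exact le_rfl
  | step h g hr ih => omega

lemma Ext.eq_of_rank_eq {n m : ℕ} {p q : C.Obj} {c : Chain C n p} {d : Chain C m q}
    {f : C.Hom p q} (h : Ext c d f) (hnm : n = m) :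
    (⟨n, p, c⟩ : CtObj C) = ⟨m, q, d⟩ ∧ HEq f (C.id p) := by
  induction h with
  | refl => exact ⟨rfl, HEq.rfl⟩
  | step h g hr ih => exact absurd (hnm ▸ h.rank_le) (by omega)

lemma Ext.uniq {n m : ℕ} {p q : C.Obj} {c : Chain C n p} {d : Chain C m q}
    {f f' : C.Hom p q} (h : Ext c d f) (h' : Ext c d f') : f = f' := by
  induction h with
  | refl =>
    rcases h'.eq_of_rank_eq rfl with ⟨-, hf⟩
    exact (eq_of_heq hf).symm
  | step h g hr ih =>
    cases h' with
    | refl => exact absurd h.rank_le (by omega)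
    | step h'' g' hr' => rw [ih h'']

lemma Ext.trans {n m k : ℕ} {p q r : C.Obj} {c : Chain C n p} {d : Chain C m q}
    {e : Chain C k r} {f : C.Hom p q} {g : C.Hom q r}
    (h1 : Ext c d f) (h2 : Ext d e g) : Ext c e (C.comp f g) := by
  induction h2 with
  | refl => rw [C.comp_id]; exact h1
  | step h g' hr ih => rw [← C.assoc]; exact (ih h1).step g' hr

lemma ext_from_nil {m : ℕ} {q : C.Obj} (d : Chain C m q) :
    ∃ f : C.Hom C.zero q, Ext Chain.nil d f := by
  induction d with
  | nil => exact ⟨C.id _, Ext.refl _⟩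
  | cons c g hr ih => obtain ⟨f, hf⟩ := ih; exact ⟨C.comp f g, hf.step g hr⟩

/-- truncation existence -/
lemma ext_trunc {m : ℕ} {q : C.Obj} (d : Chain C m q) (k : ℕ) (hk : k ≤ m) :
    ∃ (r : C.Obj) (e : Chain C k r) (g : C.Hom r q), Ext e d g := by
  induction d with
  | nil =>
    obtain rfl : k = 0 := by omega
    exact ⟨C.zero, Chain.nil, C.id _, Ext.refl _⟩
  | cons c g hr ih =>
    rename_i q'
    rcases eq_or_lt_of_le hk with rfl | hlt
    · exact ⟨q', Chain.cons c g hr, C.id _, Ext.refl _⟩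
    · obtain ⟨r, e, g', hg'⟩ := ih (by omega)
      exact ⟨r, e, C.comp g' g, hg'.step g hr⟩

/-- linearity: two prefixes of the same chain are comparable. -/
lemma ext_linear {n n' m : ℕ} {p p' q : C.Obj} {c : Chain C n p} {c' : Chain C n' p'}
    {d : Chain C m q} {f : C.Hom p q} {f' : C.Hom p' q}
    (h : Ext c d f) (h' : Ext c' d f') (hle : n ≤ n') :
    ∃ g : C.Hom p p', Ext c c' g := by
  induction h' with
  | refl => exact ⟨f, h⟩
  | step h'' g hr ih =>
    cases h with
    | refl => exact absurd h''.rank_le (by omega)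
    | step h3 g3 hr3 => exact ih h3

lemma ext_unique_rank {n n' m : ℕ} {p p' q : C.Obj} {c : Chain C n p} {c' : Chain C n' p'}
    {d : Chain C m q} {f : C.Hom p q} {f' : C.Hom p' q}
    (h : Ext c d f) (h' : Ext c' d f') (hnn : n = n') :
    (⟨n, p, c⟩ : CtObj C) = ⟨n', p', c'⟩ := by
  obtain ⟨g, hg⟩ := ext_linear h h' hnn.le
  exact (hg.eq_of_rank_eq hnn).1


lemma chain_rank (hC : C.IsUpdownCat) {n : ℕ} {p : C.Obj} (c : Chain C n p) :
    C.rank p = n := by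
  cases c with
  | nil => exact hC.rank_zero
  | cons c f hr => exact hr

lemma chain_zero {p : C.Obj} (c : Chain C 0 p) :
    (⟨0, p, c⟩ : CtObj C) = ⟨0, C.zero, Chain.nil⟩ := by
  cases c; rfl

lemma level_finite (hC : C.IsUpdownCat) (n : ℕ) :
    {a : CtObj C | a.1 = n}.Finite := by
  induction n with
  | zero =>
    apply Set.Finite.subset (Set.finite_singleton (⟨0, C.zero, Chain.nil⟩ : CtObj C))
    rintro ⟨n, p, c⟩ (h : n = 0)
    subst h
    exact chain_zero c
  | succ n ih =>
    have : Finite {a : CtObj C // a.1 = n} := ih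
    classical
    let T := Σ (b : {a : CtObj C // a.1 = n}) (q : C.level (n+1)), C.Hom b.1.2.1 q.1
    haveI hH : ∀ (b : {a : CtObj C // a.1 = n}) (q : C.level (n+1)),
        Finite (C.Hom b.1.2.1 q.1) := fun b q => hC.homFinite _ _
    have hT : Finite T := inferInstance
    let σ : T → CtObj C := fun t =>
      match t with
      | ⟨⟨⟨m, p, c⟩, hm⟩, ⟨q, hq⟩, f⟩ =>
        ⟨m + 1, q, Chain.cons c f (by rw [(hC.mem_level _ _).1 hq]; have h' : m = n := hm; omega)⟩
    apply Set.Finite.subset (Set.finite_range σ)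
    rintro ⟨m, q, c⟩ (h : m = n + 1)
    subst h
    cases c with
    | cons c f hr =>
      rename_i q'
      have hm : ((⟨n, q', c⟩ : CtObj C)).1 = n := rfl
      exact ⟨⟨⟨⟨n, q', c⟩, hm⟩, ⟨q, (hC.mem_level _ _).2 hr⟩, f⟩, rfl⟩

/-- hom sets of the universal cover -/
def CtHom (a b : CtObj C) : Type := {f : C.Hom a.2.1 b.2.1 // Ext a.2.2 b.2.2 f}

instance CtHom.subsingleton (a b : CtObj C) : Subsingleton (CtHom a b) :=
  ⟨fun ⟨f, hf⟩ ⟨g, hg⟩ => Subtype.ext (hf.uniq hg)⟩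

def CtComp {a b c : CtObj C} (f : CtHom a b) (g : CtHom b c) : CtHom a c :=
  ⟨C.comp f.1 g.1, f.2.trans g.2⟩

/-- the universal cover as updown data -/
noncomputable def Ct (C : UpdownData) (hC : C.IsUpdownCat) : UpdownData where
  Obj := CtObj C
  Hom := CtHom
  id a := ⟨C.id a.2.1, Ext.refl a.2.2⟩
  comp := CtComp
  id_comp f := Subsingleton.elim _ _
  comp_id f := Subsingleton.elim _ _
  assoc f g h := Subsingleton.elim _ _
  rank a := a.1
  level n := (level_finite hC n).toFinset
  zero := ⟨0, C.zero, Chain.nil⟩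

lemma ctHom_eq {hC : C.IsUpdownCat} {a b : CtObj C} (f g : (Ct C hC).Hom a b) : f = g :=
  Subsingleton.elim (α := CtHom a b) f g

lemma Ct_isUpdown (hC : C.IsUpdownCat) : (Ct C hC).IsUpdownCat where
  mem_level n a := by
    show a ∈ (level_finite hC n).toFinset ↔ a.1 = n
    exact Set.Finite.mem_toFinset (hs := level_finite hC n)
  rank_zero := rfl
  zero_unique := by
    rintro ⟨n, p, c⟩ (h : n = 0)
    subst h
    exact chain_zero c
  zero_init := by
    rintro ⟨n, p, c⟩
    obtain ⟨f, hf⟩ := ext_from_nil c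
    exact ⟨⟨f, hf⟩⟩
  homFinite a b := @Finite.of_subsingleton (CtHom a b) (CtHom.subsingleton a b)
  hom_rank := by
    rintro ⟨n, p, c⟩ ⟨m, q, d⟩ ⟨f, hf⟩
    rcases lt_or_eq_of_le hf.rank_le with h | h
    · exact Or.inl h
    · exact Or.inr (hf.eq_of_rank_eq h).1
  aut_group a f := ⟨f, ctHom_eq _ _, ctHom_eq _ _⟩
  factor := by
    rintro ⟨n, p, c⟩ ⟨m, q, d⟩ ⟨f, hf⟩ hlt
    have hlt' : n + 1 < m := hlt
    obtain ⟨r, e, g, hg⟩ := ext_trunc d (n+1) hlt'.le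
    obtain ⟨h, hh⟩ := ext_linear hf hg (Nat.le_succ n)
    exact ⟨⟨n+1, r, e⟩, ⟨h, hh⟩, ⟨g, hg⟩, rfl, ctHom_eq _ _⟩
  free_pre p q h α f _ := ctHom_eq _ _
  free_post p q h β f _ := ctHom_eq _ _

lemma Ct_simple (hC : C.IsUpdownCat) : SimpleUD (Ct C hC) := by
  constructor
  · exact fun a b => CtHom.subsingleton a b
  · rintro ⟨n, p, c⟩ ⟨m, q, d⟩ ⟨f, hf⟩ k hnk hkm
    have hnk' : n < k := hnk
    have hkm' : k < m := hkm
    obtain ⟨r, e, g, hg⟩ := ext_trunc d k hkm'.le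
    obtain ⟨h, hh⟩ := ext_linear hf hg hnk'.le
    refine ⟨⟨k, r, e⟩, ⟨rfl, ⟨h, hh⟩, ⟨g, hg⟩, ctHom_eq _ _⟩, ?_⟩
    rintro ⟨k', r', e'⟩ ⟨(hk' : k' = k), ⟨g1, hg1⟩, ⟨h1, hh1⟩, -⟩
    subst hk'
    exact ext_unique_rank hh1 hg rfl

/-- the covering projection -/
def piF (hC : C.IsUpdownCat) : UDFunctor (Ct C hC) C where
  obj a := a.2.1
  map f := f.1
  rank_eq a := chain_rank hC a.2.2
  map_id a := rfl
  map_comp f g := rfl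


/-- full intermediate factorization in any updown category -/
lemma factor_at {D : UpdownData} (hD : D.IsUpdownCat) :
    ∀ (d : ℕ) (p q : D.Obj) (f : D.Hom p q) (k : ℕ), D.rank p ≤ k → k ≤ D.rank q →
      k - D.rank p ≤ d →
      ∃ (r : D.Obj) (g : D.Hom p r) (h : D.Hom r q), D.rank r = k ∧ D.comp g h = f := by
  intro d
  induction d with
  | zero =>
    intro p q f k h1 h2 h3
    have : k = D.rank p := by omega
    subst this
    exact ⟨p, D.id p, f, rfl, D.id_comp f⟩
  | succ d ih =>
    intro p q f k h1 h2 h3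
    rcases eq_or_lt_of_le h1 with h | h
    · exact ⟨p, D.id p, f, h, D.id_comp f⟩
    · rcases eq_or_lt_of_le (show D.rank p + 1 ≤ D.rank q by omega) with he | he
      · -- k ≤ rank q = rank p + 1 and k > rank p so k = rank q
        have : k = D.rank q := by omega
        subst this
        exact ⟨q, f, D.id q, rfl, D.comp_id f⟩
      · obtain ⟨r, g, h', hr, hgh⟩ := hD.factor p q f he
        obtain ⟨s, u, v, hs, huv⟩ := ih r q h' k (by omega) h2 (by omega)
        exact ⟨s, D.comp g u, v, hs, by rw [D.assoc, huv, hgh]⟩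

/-- every object is the end of some chain -/
lemma exists_chain (hC : C.IsUpdownCat) : ∀ (n : ℕ) (p : C.Obj), C.rank p = n →
    Nonempty (Chain C n p) := by
  intro n
  induction n with
  | zero => intro p hp; rw [hC.zero_unique p hp]; exact ⟨Chain.nil⟩
  | succ n ih =>
    intro p hp
    obtain ⟨g⟩ := hC.zero_init p
    obtain ⟨r, g1, h, hr, -⟩ := factor_at hC n C.zero p g n (by rw [hC.rank_zero]; omega)
      (by omega) (by omega)
    obtain ⟨c⟩ := ih r hr
    exact ⟨Chain.cons c h (by omega)⟩

/-- inversion: a one-step extension of `c` is a `cons` of `c`. -/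
lemma ext_succ {n : ℕ} {p q : C.Obj} {c : Chain C n p} {d : Chain C (n+1) q}
    {u : C.Hom p q} (h : Ext c d u) :
    ∃ hr : C.rank q = n + 1, d = Chain.cons c u hr := by
  cases h with
  | step h g hr =>
    rename_i q' u₀ d₀
    obtain ⟨he, hf⟩ := h.eq_of_rank_eq rfl
    obtain ⟨rfl, hc⟩ : p = q' ∧ HEq c d₀ := by
      rw [Sigma.mk.inj_iff] at he
      obtain ⟨-, he2⟩ := he
      have he3 := eq_of_heq he2
      rw [Sigma.mk.inj_iff] at he3
      exact he3
    have hc' : c = d₀ := eq_of_heq hc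
    have hf' : u₀ = C.id p := eq_of_heq hf
    subst hc'
    exact ⟨hr, by rw [hf', C.id_comp]⟩
  
lemma pi_covering (hC : C.IsUpdownCat) : IsCovering (piF hC) := by
  constructor
  · intro p
    obtain ⟨c⟩ := exists_chain hC (C.rank p) p rfl
    exact ⟨⟨C.rank p, p, c⟩, rfl⟩
  · rintro ⟨n, p, c⟩ ⟨m, q, d⟩ hrank
    have hm : m = n + 1 := hrank
    subst hm
    constructor
    · rintro ⟨⟨⟨m₁, q₁, d₁⟩, h₁⟩, v₁, hv₁⟩ ⟨⟨⟨m₂, q₂, d₂⟩, h₂⟩, v₂, hv₂⟩ hxy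
      have e₁ : q₁ = q := h₁
      have e₂ : q₂ = q := h₂
      subst e₁; subst e₂
      have hm₁ : m₁ = n + 1 := by
        have t1 := chain_rank hC d₁; have t2 := chain_rank hC d; omega
      have hm₂ : m₂ = n + 1 := by
        have t1 := chain_rank hC d₂; have t2 := chain_rank hC d; omega
      subst hm₁; subst hm₂
      obtain ⟨hr₁, hd₁⟩ := ext_succ hv₁
      obtain ⟨hr₂, hd₂⟩ := ext_succ hv₂
      have hu : v₁ = v₂ :=
        eq_of_heq (((cast_heq _ _).symm.trans (heq_of_eq hxy)).trans (cast_heq _ _))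
      have hd : d₁ = d₂ := hd₁.trans (by rw [hu]; exact hd₂.symm)
      subst hd; subst hu
      rfl
    · intro f
      have hr : C.rank q = n + 1 := chain_rank hC d
      refine ⟨⟨⟨⟨n+1, q, Chain.cons c f hr⟩, rfl⟩, ⟨f, ?_⟩⟩, ?_⟩
      · have h := (Ext.refl c).step f hr
        exact (congrArg (Ext c (Chain.cons c f hr)) (C.id_comp f)).mp h
      · rfl


section Lifting

variable {C' : UpdownData} (P : UDFunctor C' C) (hC : C.IsUpdownCat)
  (hC' : C'.IsUpdownCat) (hP : IsCovering P)

/-- choose a lift of a one-step morphism along a covering map -/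
noncomputable def chooseLift (p' : C'.Obj) {q : C.Obj} (f : C.Hom (P.obj p') q)
    (hq : C.rank q = C'.rank p' + 1) :
    Σ' (q' : C'.Obj) (f' : C'.Hom p' q'), P.obj q' = q ∧ HEq (P.map f') f :=
  Classical.choice (by
    obtain ⟨q₀, hq₀⟩ := hP.1 q
    have hr : C'.rank q₀ = C'.rank p' + 1 := by
      have h := P.rank_eq q₀; rw [hq₀] at h; omega
    obtain ⟨⟨⟨q', hq'⟩, f'⟩, hf'⟩ := (hP.2 p' q₀ hr).2
      (cast (by rw [hq₀]) f : C.Hom (P.obj p') (P.obj q₀))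
    refine ⟨q', f', hq'.trans hq₀, ?_⟩
    have hf'' : cast (congrArg (fun y => C.Hom (P.obj p') y) hq') (P.map f')
        = cast (by rw [hq₀]) f := hf'
    exact ((cast_heq _ (P.map f')).symm.trans (heq_of_eq hf'')).trans (cast_heq _ f))

/-- lift of a chain along a covering map -/
noncomputable def liftB : ∀ {n : ℕ} {p : C.Obj}, Chain C n p →
    Σ' (p' : C'.Obj), P.obj p' = p ∧ C'.rank p' = n
  | _, _, Chain.nil =>
    ⟨C'.zero, hC.zero_unique _ (by rw [P.rank_eq]; exact hC'.rank_zero), hC'.rank_zero⟩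
  | _, _, Chain.cons c f hr =>
    let L := liftB c
    let K := chooseLift P hP L.1 (cast (congrArg (fun y => C.Hom y _) L.2.1.symm) f)
      (by rw [L.2.2, hr])
    ⟨K.1, K.2.2.1, by
      have h := P.rank_eq K.1
      rw [K.2.2.1, hr] at h
      omega⟩

/-- the chosen lift of the last step of a chain -/
noncomputable def liftStep {n : ℕ} {p q : C.Obj} (c : Chain C n p) (f : C.Hom p q)
    (hr : C.rank q = n + 1) :
    C'.Hom (liftB P hC hC' hP c).1 (liftB P hC hC' hP (Chain.cons c f hr)).1 :=
  (chooseLift P hP (liftB P hC hC' hP c).1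
    (cast (congrArg (fun y => C.Hom y _) (liftB P hC hC' hP c).2.1.symm) f)
    (by rw [(liftB P hC hC' hP c).2.2, hr])).2.1

lemma liftStep_heq {n : ℕ} {p q : C.Obj} (c : Chain C n p) (f : C.Hom p q)
    (hr : C.rank q = n + 1) :
    HEq (P.map (liftStep P hC hC' hP c f hr)) f := by
  refine ((chooseLift P hP (liftB P hC hC' hP c).1
    (cast (congrArg (fun y => C.Hom y _) (liftB P hC hC' hP c).2.1.symm) f)
    (by rw [(liftB P hC hC' hP c).2.2, hr])).2.2.2).trans (cast_heq _ f)


lemma lift_unique {n : ℕ} {p : C.Obj} (c : Chain C n p) {t' : C'.Obj}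
    (ht : C'.rank t' = n + 1) (f' : C'.Hom (liftB P hC hC' hP c).1 t')
    {q : C.Obj} (g : C.Hom p q) (hr : C.rank q = n + 1)
    (hq : P.obj t' = q) (hfg : HEq (P.map f') g) :
    (liftB P hC hC' hP (Chain.cons c g hr)).1 = t' ∧
      HEq (liftStep P hC hC' hP c g hr) f' := by
  have hrt : C'.rank t' = C'.rank (liftB P hC hC' hP c).1 + 1 := by
    rw [ht, (liftB P hC hC' hP c).2.2]
  have hx : P.obj (liftB P hC hC' hP (Chain.cons c g hr)).1 = P.obj t' := by
    rw [(liftB P hC hC' hP (Chain.cons c g hr)).2.1, hq]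
  have key : inducedMap P (liftB P hC hC' hP c).1 t'
      ⟨⟨(liftB P hC hC' hP (Chain.cons c g hr)).1, hx⟩, liftStep P hC hC' hP c g hr⟩
      = inducedMap P (liftB P hC hC' hP c).1 t' ⟨⟨t', rfl⟩, f'⟩ := by
    show cast (congrArg (fun y => C.Hom (P.obj (liftB P hC hC' hP c).1) y) hx)
        (P.map (liftStep P hC hC' hP c g hr))
      = cast (congrArg (fun y => C.Hom (P.obj (liftB P hC hC' hP c).1) y) rfl) (P.map f')
    rw [cast_eq_iff_heq]
    refine HEq.trans ?_ (cast_heq _ _).symm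
    exact (liftStep_heq P hC hC' hP c g hr).trans hfg.symm
  have h := (hP.2 (liftB P hC hC' hP c).1 t' hrt).1 key
  rw [Sigma.mk.inj_iff] at h
  obtain ⟨h1, h2⟩ := h
  rw [Subtype.mk.injEq] at h1
  exact ⟨h1, h2⟩


lemma cast_trivial {T : Sort _} (e : T = T) (x : T) : cast e x = x := by
  rw [Subsingleton.elim e rfl]; exact cast_eq rfl x

open Classical in
/-- the lift of a morphism of the universal cover along a covering map -/
noncomputable def Fhom : ∀ {m : ℕ} {q : C.Obj} (d : Chain C m q) {n : ℕ} {p : C.Obj}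
    (c : Chain C n p), (∃ f, Ext c d f) →
      C'.Hom (liftB P hC hC' hP c).1 (liftB P hC hC' hP d).1
  | _, _, Chain.nil, n, p, c, h =>
      have e : (⟨n, p, c⟩ : CtObj C) = ⟨0, C.zero, Chain.nil⟩ :=
        (h.choose_spec.eq_of_rank_eq (Nat.le_zero.mp h.choose_spec.rank_le)).1
      cast (congrArg
        (fun a : CtObj C => C'.Hom (liftB P hC hC' hP c).1 (liftB P hC hC' hP a.2.2).1) e)
        (C'.id _)
  | _, _, Chain.cons d' g hr, n, p, c, h =>
      if e : (⟨n, p, c⟩ : CtObj C) = ⟨_, _, Chain.cons d' g hr⟩ then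
        cast (congrArg
          (fun a : CtObj C => C'.Hom (liftB P hC hC' hP c).1 (liftB P hC hC' hP a.2.2).1) e)
          (C'.id _)
      else
        have h' : ∃ f', Ext c d' f' := by
          obtain ⟨f, hf⟩ := h
          cases hf with
          | refl => exact absurd rfl e
          | step hf' g' hr' => exact ⟨_, hf'⟩
        C'.comp (Fhom d' c h') (liftStep P hC hC' hP d' g hr)

lemma Fhom_self : ∀ {n : ℕ} {p : C.Obj} (c : Chain C n p) (h : ∃ f, Ext c c f),
    Fhom P hC hC' hP c c h = C'.id _ := by
  intro n p c h
  cases c with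
  | nil =>
    rw [Fhom]
    exact cast_trivial _ _
  | cons c f hr =>
    rw [Fhom, dif_pos rfl]
    exact cast_trivial _ _


lemma Fhom_comp : ∀ {k : ℕ} {r : C.Obj} (e : Chain C k r) {m : ℕ} {q : C.Obj}
    (d : Chain C m q) {n : ℕ} {p : C.Obj} (c : Chain C n p)
    (h1 : ∃ f, Ext c d f) (h2 : ∃ f, Ext d e f) (h3 : ∃ f, Ext c e f),
    Fhom P hC hC' hP e c h3
      = C'.comp (Fhom P hC hC' hP d c h1) (Fhom P hC hC' hP e d h2) := by
  intro k r e
  induction e with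
  | nil =>
    intro m q d n p c h1 h2 h3
    have e2 : (⟨m, q, d⟩ : CtObj C) = ⟨0, C.zero, Chain.nil⟩ :=
      (h2.choose_spec.eq_of_rank_eq (Nat.le_zero.mp h2.choose_spec.rank_le)).1
    obtain ⟨rfl, hx⟩ := Sigma.mk.inj_iff.1 e2
    obtain ⟨rfl, hx'⟩ := Sigma.mk.inj_iff.1 (eq_of_heq hx)
    obtain rfl := eq_of_heq hx'
    have e1 : (⟨n, p, c⟩ : CtObj C) = ⟨0, C.zero, Chain.nil⟩ :=
      (h1.choose_spec.eq_of_rank_eq (Nat.le_zero.mp h1.choose_spec.rank_le)).1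
    obtain ⟨rfl, hy⟩ := Sigma.mk.inj_iff.1 e1
    obtain ⟨rfl, hy'⟩ := Sigma.mk.inj_iff.1 (eq_of_heq hy)
    obtain rfl := eq_of_heq hy'
    simp only [Fhom_self, C'.id_comp]
  | cons e' g hr ih =>
    intro m q d n p c h1 h2 h3
    by_cases ed : (⟨m, q, d⟩ : CtObj C) = ⟨_, _, Chain.cons e' g hr⟩
    · obtain ⟨rfl, hx⟩ := Sigma.mk.inj_iff.1 ed
      obtain ⟨rfl, hx'⟩ := Sigma.mk.inj_iff.1 (eq_of_heq hx)
      obtain rfl := eq_of_heq hx'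
      rw [Fhom_self, C'.comp_id]
    · have h2' : ∃ f', Ext d e' f' := by
        obtain ⟨f, hf⟩ := h2
        cases hf with
        | refl => exact absurd rfl ed
        | step hf' g' hr' => exact ⟨_, hf'⟩
      have ec : ¬ (⟨n, p, c⟩ : CtObj C) = ⟨_, _, Chain.cons e' g hr⟩ := by
        intro ec
        have hn := (Sigma.mk.inj_iff.1 ec).1
        have l1 := h1.choose_spec.rank_le
        have l2 := h2'.choose_spec.rank_le
        have hd := (h1.choose_spec.eq_of_rank_eq (by omega)).1
        exact ed (hd.symm.trans ec)
      have h3' : ∃ f', Ext c e' f' := ⟨_, h1.choose_spec.trans h2'.choose_spec⟩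
      simp only [Fhom]
      rw [dif_neg ec, dif_neg ed, ← C'.assoc, ih d c h1 h2' h3']

lemma comp_heq {D : UpdownData} {x x' y y' z z' : D.Obj} (hx : x = x') (hy : y = y')
    (hz : z = z') {u : D.Hom x y} {u' : D.Hom x' y'} {v : D.Hom y z} {v' : D.Hom y' z'}
    (hu : HEq u u') (hv : HEq v v') : HEq (D.comp u v) (D.comp u' v') := by
  subst hx; subst hy; subst hz
  rw [eq_of_heq hu, eq_of_heq hv]

lemma Fhom_heq : ∀ {m : ℕ} {q : C.Obj} (d : Chain C m q) {n : ℕ} {p : C.Obj}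
    (c : Chain C n p) (f : C.Hom p q) (hf : Ext c d f),
    HEq (P.map (Fhom P hC hC' hP d c ⟨f, hf⟩)) f := by
  intro m q d
  induction d with
  | nil =>
    intro n p c f hf
    have e1 : (⟨n, p, c⟩ : CtObj C) = ⟨0, C.zero, Chain.nil⟩ ∧ HEq f (C.id p) :=
      hf.eq_of_rank_eq (Nat.le_zero.mp hf.rank_le)
    obtain ⟨e1, hfid⟩ := e1
    obtain ⟨rfl, hy⟩ := Sigma.mk.inj_iff.1 e1
    obtain ⟨rfl, hy'⟩ := Sigma.mk.inj_iff.1 (eq_of_heq hy)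
    obtain rfl := eq_of_heq hy'
    rw [Fhom_self, P.map_id, eq_of_heq hfid]
    rw [(liftB P hC hC' hP Chain.nil).2.1]
  | cons e' g hr ih =>
    intro n p c f hf
    by_cases ec : (⟨n, p, c⟩ : CtObj C) = ⟨_, _, Chain.cons e' g hr⟩
    · have hn := (Sigma.mk.inj_iff.1 ec).1
      obtain ⟨e2, hfid⟩ := hf.eq_of_rank_eq hn
      obtain ⟨rfl, hy⟩ := Sigma.mk.inj_iff.1 e2
      obtain ⟨rfl, hy'⟩ := Sigma.mk.inj_iff.1 (eq_of_heq hy)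
      obtain rfl := eq_of_heq hy'
      rw [Fhom_self, P.map_id, eq_of_heq hfid]
      rw [(liftB P hC hC' hP (Chain.cons e' g hr)).2.1]
    · cases hf with
      | refl => exact absurd rfl ec
      | step hf' g' hr' =>
        rename_i f₀
        rw [Fhom, dif_neg ec, P.map_comp]
        refine comp_heq ?_ ?_ ?_ (ih c f₀ hf') (liftStep_heq P hC hC' hP e' g hr)
        · exact (liftB P hC hC' hP c).2.1
        · exact (liftB P hC hC' hP e').2.1
        · exact (liftB P hC hC' hP (Chain.cons e' g hr)).2.1


/-- the induced functor from the universal cover to a covering -/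
noncomputable def FF : UDFunctor (Ct C hC) C' where
  obj a := (liftB P hC hC' hP a.2.2).1
  map {a b} u :=
    Fhom P hC hC' hP b.2.2 a.2.2 ⟨(u : CtHom a b).1, (u : CtHom a b).2⟩
  rank_eq a := (liftB P hC hC' hP a.2.2).2.2
  map_id a := Fhom_self P hC hC' hP a.2.2 _
  map_comp {a b c} u v :=
    Fhom_comp P hC hC' hP c.2.2 b.2.2 a.2.2
      ⟨(u : CtHom a b).1, (u : CtHom a b).2⟩ ⟨(v : CtHom b c).1, (v : CtHom b c).2⟩ _

lemma UDFunctor_ext {A B : UpdownData} {F G : UDFunctor A B}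
    (hobj : ∀ a, F.obj a = G.obj a)
    (hmap : ∀ (a b : A.Obj) (f : A.Hom a b), HEq (F.map f) (G.map f)) : F = G := by
  obtain ⟨Fo, Fm, hF1, hF2, hF3⟩ := F
  obtain ⟨Go, Gm, hG1, hG2, hG3⟩ := G
  have h1 : Fo = Go := funext hobj
  subst h1
  have h2 : @Fm = @Gm := by
    funext a b f
    exact eq_of_heq (hmap a b f)
  subst h2
  rfl

lemma comp_eq_pi : UDFunctor.comp (FF P hC hC' hP) P = piF hC := by
  apply UDFunctor_ext
  · intro a
    exact (liftB P hC hC' hP a.2.2).2.1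
  · intro a b u
    exact Fhom_heq P hC hC' hP b.2.2 a.2.2 (u : CtHom a b).1 (u : CtHom a b).2


lemma FF_obj_surj : Function.Surjective (FF P hC hC' hP).obj := by
  suffices h : ∀ (n : ℕ) (p' : C'.Obj), C'.rank p' = n →
      ∃ a : CtObj C, (FF P hC hC' hP).obj a = p' by
    intro p'; exact h (C'.rank p') p' rfl
  intro n
  induction n with
  | zero =>
    intro p' h0
    refine ⟨⟨0, C.zero, Chain.nil⟩, ?_⟩
    rw [hC'.zero_unique p' h0]
    rfl
  | succ n ih =>
    intro p' h0
    obtain ⟨g⟩ := hC'.zero_init p'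
    obtain ⟨q', g1, f', hq', -⟩ := factor_at hC' n C'.zero p' g n
      (by rw [hC'.rank_zero]; omega) (by omega) (by rw [hC'.rank_zero]; omega)
    obtain ⟨a, ha⟩ := ih q' hq'
    have ha' : (liftB P hC hC' hP a.2.2).1 = q' := ha
    have han : a.1 = n := by
      have h1 := (liftB P hC hC' hP a.2.2).2.2
      rw [ha'] at h1; omega
    let f'' : C'.Hom (liftB P hC hC' hP a.2.2).1 p' :=
      cast (congrArg (fun y => C'.Hom y p') ha'.symm) f'
    have hPa : P.obj (liftB P hC hC' hP a.2.2).1 = a.2.1 := (liftB P hC hC' hP a.2.2).2.1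
    let gg : C.Hom a.2.1 (P.obj p') :=
      cast (congrArg (fun y => C.Hom y (P.obj p')) hPa) (P.map f'')
    have hr : C.rank (P.obj p') = a.1 + 1 := by rw [P.rank_eq, h0, han]
    have hu := lift_unique P hC hC' hP a.2.2 (t' := p') (by rw [h0, han]) f'' gg hr rfl
      (cast_heq _ _).symm
    exact ⟨⟨a.1 + 1, P.obj p', Chain.cons a.2.2 gg hr⟩, hu.1⟩


lemma map_heq {D E : UpdownData} (Q : UDFunctor D E) {x y y' : D.Obj} (hy : y = y')
    {u : D.Hom x y} {u' : D.Hom x y'} (h : HEq u u') : HEq (Q.map u) (Q.map u') := by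
  subst hy; rw [eq_of_heq h]

lemma FF_covering : IsCovering (FF P hC hC' hP) := by
  refine ⟨FF_obj_surj P hC hC' hP, ?_⟩
  rintro ⟨n, p, c⟩ ⟨m, q, d⟩ hrank
  have hm : m = n + 1 := hrank
  subst hm
  constructor
  · rintro ⟨⟨⟨m₁, q₁, d₁⟩, h₁⟩, v₁, hv₁⟩ ⟨⟨⟨m₂, q₂, d₂⟩, h₂⟩, v₂, hv₂⟩ hxy
    have h₁' : (liftB P hC hC' hP d₁).1 = (liftB P hC hC' hP d).1 := h₁
    have h₂' : (liftB P hC hC' hP d₂).1 = (liftB P hC hC' hP d).1 := h₂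
    have hm₁ : m₁ = n + 1 := by
      have t1 := (liftB P hC hC' hP d₁).2.2
      have t2 := (liftB P hC hC' hP d).2.2
      rw [← t1, h₁', t2]
    have hm₂ : m₂ = n + 1 := by
      have t1 := (liftB P hC hC' hP d₂).2.2
      have t2 := (liftB P hC hC' hP d).2.2
      rw [← t1, h₂', t2]
    subst hm₁; subst hm₂
    obtain ⟨hr₁, hd₁⟩ := ext_succ hv₁
    obtain ⟨hr₂, hd₂⟩ := ext_succ hv₂
    have hq12 : q₁ = q₂ := by
      have u1 := (liftB P hC hC' hP d₁).2.1
      have u2 := (liftB P hC hC' hP d₂).2.1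
      rw [← u1, ← u2, h₁', h₂']
    subst hq12
    simp only [inducedMap] at hxy
    have hFF : HEq ((FF P hC hC' hP).map
          (show (Ct C hC).Hom ⟨n,p,c⟩ ⟨n+1,q₁,d₁⟩ from ⟨v₁, hv₁⟩))
        ((FF P hC hC' hP).map
          (show (Ct C hC).Hom ⟨n,p,c⟩ ⟨n+1,q₁,d₂⟩ from ⟨v₂, hv₂⟩)) :=
      ((cast_heq _ _).symm.trans (heq_of_eq hxy)).trans (cast_heq _ _)
    have hP12 := map_heq P (h₁'.trans h₂'.symm) hFF
    have hv12 : v₁ = v₂ := eq_of_heq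
      (((Fhom_heq P hC hC' hP d₁ c v₁ hv₁).symm.trans hP12).trans
        (Fhom_heq P hC hC' hP d₂ c v₂ hv₂))
    have hd : d₁ = d₂ := hd₁.trans (by rw [hv12]; exact hd₂.symm)
    subst hd; subst hv12
    rfl
  · intro f'
    have hPa : P.obj (liftB P hC hC' hP c).1 = p := (liftB P hC hC' hP c).2.1
    let gg : C.Hom p (P.obj (liftB P hC hC' hP d).1) :=
      cast (congrArg (fun y => C.Hom y (P.obj (liftB P hC hC' hP d).1)) hPa) (P.map f')
    have hr : C.rank (P.obj (liftB P hC hC' hP d).1) = n + 1 := by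
      rw [P.rank_eq, (liftB P hC hC' hP d).2.2]
    have ht : C'.rank (liftB P hC hC' hP d).1 = n + 1 := (liftB P hC hC' hP d).2.2
    have hu := lift_unique P hC hC' hP c ht f' gg hr rfl (cast_heq _ _).symm
    have hext : Ext c (Chain.cons c gg hr) gg := by
      have h := (Ext.refl c).step gg hr
      rwa [C.id_comp] at h
    refine ⟨⟨⟨⟨n+1, P.obj (liftB P hC hC' hP d).1, Chain.cons c gg hr⟩, hu.1⟩,
      ⟨gg, hext⟩⟩, ?_⟩
    have hne : ¬ (⟨n, p, c⟩ : CtObj C)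
        = ⟨n+1, P.obj (liftB P hC hC' hP d).1, Chain.cons c gg hr⟩ := by
      intro hcc
      have := (Sigma.mk.inj_iff.1 hcc).1
      omega
    have key : (FF P hC hC' hP).map
        (show (Ct C hC).Hom ⟨n,p,c⟩
          ⟨n+1, P.obj (liftB P hC hC' hP d).1, Chain.cons c gg hr⟩ from ⟨gg, hext⟩)
        = liftStep P hC hC' hP c gg hr := by
      show Fhom P hC hC' hP (Chain.cons c gg hr) c ⟨gg, hext⟩ = _
      rw [Fhom, dif_neg hne]
      show C'.comp (Fhom P hC hC' hP c c ⟨C.id p, Ext.refl c⟩)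
        (liftStep P hC hC' hP c gg hr) = _
      rw [Fhom_self, C'.id_comp]
    simp only [inducedMap]
    rw [key]
    exact cast_eq_iff_heq.2 hu.2

end Lifting
end UniversalCover
open UpdownData in
/-- every unilateral updown category has a universal cover: a
simple updown category `Ct` with a covering map `π : Ct → C` such that every
covering map `P : C' → C` factors as `π = P ∘ F` for some covering map
`F : Ct → C'`. -/
theorem updown_unilateral_has_universal_cover (C : UpdownData)
    (hC : C.IsUpdownCat) (hu : Unilateral C) :
    ∃ (Ct : UpdownData) (π : UDFunctor Ct C),
      Ct.IsUpdownCat ∧ SimpleUD Ct ∧ IsCovering π ∧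
      ∀ (C' : UpdownData) (P : UDFunctor C' C),
        C'.IsUpdownCat → Unilateral C' → IsCovering P →
        ∃ F : UDFunctor Ct C', IsCovering F ∧ UDFunctor.comp F P = π := by
  refine ⟨UniversalCover.Ct C hC, UniversalCover.piF hC, UniversalCover.Ct_isUpdown hC,
    UniversalCover.Ct_simple hC, UniversalCover.pi_covering hC, ?_⟩
  intro C' P hC' hu' hP
  exact ⟨UniversalCover.FF P hC hC' hP, UniversalCover.FF_covering P hC hC' hP,
    UniversalCover.comp_eq_pi P hC hC' hP⟩
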